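/- Let G be a topological group, let n, r be natural numbers, and let ρ : G →* (V ≃ₗ[ℂ] V) be a linear action of G on V = (Fin n → ℂ). For each i ∈ Fin r let fᵢ ∈ MvPolynomial (Fin n) ℂ be an irreducible homogeneous polynomial (say of degree dᵢ) that is a relative invariant with character χᵢ : G →* ℂˣ, where each χᵢ is continuous. Assume that for each i there is a point vᵢ ∈ V such that: fᵢ(vᵢ) = 0; fⱼ(vᵢ) ≠ 0 for every j ≠ i; every polynomial p ∈ MvPolynomial (Fin n) ℂ that vanishes at ρ(g)vᵢ for all g ∈ G is divisible by fᵢ; and there exists an element g in the connected component of the identity of the stabilizer set {g : ρ(g)vᵢ = vᵢ} (with the subspace topology from G) such that χᵢ(g) ≠ 1. Let k : Fin r → ℕ, set F = ∏ᵢ fᵢ^{kᵢ}, let h₁ ∈ MvPolynomial (Fin n) ℂ be homogeneous of degree ∑ᵢ kᵢ·dᵢ with h₁ and F relatively prime (IsRelPrime h₁ F), and let Φ : G → ℂ satisfy h₁(ρ(g)v) = (∏ᵢ χᵢ(g)^{kᵢ})·(F(v)·Φ(g) + h₁(v)) for all g ∈ G and v ∈ V. Then Φ(g) = 0 for every g ∈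 G. -/

import Mathlib

open MvPolynomial

lemma subsingleton_of_preconnected_subset_finite {X : Type*} [TopologicalSpace X] [T1Space X]
    {s t : Set X} (hs : IsPreconnected s) (hst : s ⊆ t) (ht : t.Finite) : s.Subsingleton := by
  intro a ha b hb
  by_contra hab
  have hU : IsOpen ((t \ {a}) : Set X)ᶜ := ((ht.subset Set.diff_subset).isClosed).isOpen_compl
  have hV : IsOpen ({a}ᶜ : Set X) := isOpen_compl_singleton
  have hcover : s ⊆ (t \ {a})ᶜ ∪ {a}ᶜ := by
    intro x hx
    by_cases hxa : x = a
    · left; simp [hxa]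
    · right; simpa using hxa
  have hne1 : (s ∩ (t \ {a})ᶜ).Nonempty := ⟨a, ha, by simp⟩
  have hne2 : (s ∩ {a}ᶜ).Nonempty := ⟨b, hb, by simpa using fun h => hab h.symm⟩
  obtain ⟨x, hxs, hxU, hxV⟩ := hs _ _ hU hV hcover hne1 hne2
  exact hxU ⟨hst hxs, hxV⟩

/-- A prehomogeneous vector space defining a linear free divisor has no nontrivial
additive relative invariants: under the hypotheses encoding Brion's criterion
(generic points `v i` on the irreducible hypersurface components, Zariski density of their
orbits, and nontriviality of the character `χ i` on the identity component of the
isotropy group at `v i`), any additive function `Φ` satisfying the global equation of an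
additive relative invariant `h₁ / ∏ i, (f i) ^ (k i)` is identically zero. -/
theorem no_nontrivial_additive_relative_invariants_of_linear_free_divisor
    {G : Type*} [Group G] [TopologicalSpace G] [IsTopologicalGroup G]
    (n r : ℕ) (ρ : G →* ((Fin n → ℂ) ≃ₗ[ℂ] (Fin n → ℂ)))
    (f : Fin r → MvPolynomial (Fin n) ℂ) (d : Fin r → ℕ) (χ : Fin r → (G →* ℂˣ))
    (hχcont : ∀ i, Continuous fun g => χ i g)
    (hirr : ∀ i, Irreducible (f i))
    (hhom : ∀ i, (f i).IsHomogeneous (d i))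
    (hrel : ∀ i (g : G) (w : Fin n → ℂ),
      eval (ρ g w) (f i) = (χ i g : ℂ) * eval w (f i))
    (v : Fin r → (Fin n → ℂ))
    (hvzero : ∀ i, eval (v i) (f i) = 0)
    (hvne : ∀ i j, j ≠ i → eval (v i) (f j) ≠ 0)
    (hdense : ∀ i (p : MvPolynomial (Fin n) ℂ),
      (∀ g : G, eval (ρ g (v i)) p = 0) → f i ∣ p)
    (hnontriv : ∀ i, ∃ s : {g : G // ρ g (v i) = v i},
      s ∈ connectedComponent (⟨1, by simp⟩ : {g : G // ρ g (v i) = v i}) ∧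
      χ i s.1 ≠ 1)
    (k : Fin r → ℕ) (h₁ : MvPolynomial (Fin n) ℂ)
    (hh₁hom : h₁.IsHomogeneous (∑ i, k i * d i))
    (hrp : IsRelPrime h₁ (∏ i, (f i) ^ (k i)))
    (Φ : G → ℂ)
    (hΦ : ∀ (g : G) (w : Fin n → ℂ),
      eval (ρ g w) h₁ =
        (∏ i, ((χ i g : ℂ)) ^ (k i)) *
          (eval w (∏ i, (f i) ^ (k i)) * Φ g + eval w h₁)) :
    ∀ g : G, Φ g = 0 := by
  -- Step 1: every k i is zero.
  have hk : ∀ i, k i = 0 := by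
    intro i
    by_contra hki
    -- F vanishes at v i
    have hFv : eval (v i) (∏ j, (f j) ^ (k j)) = 0 := by
      rw [map_prod]
      exact Finset.prod_eq_zero (Finset.mem_univ i) (by rw [map_pow, hvzero, zero_pow hki])
    -- characters χ j, j ≠ i, are trivial on the stabilizer of v i
    have hχj : ∀ (s : {g : G // ρ g (v i) = v i}) (j : Fin r), j ≠ i → (χ j s.1 : ℂ) = 1 := by
      intro s j hj
      have h := hrel j s.1 (v i)
      rw [s.2] at h
      have h2 : ((χ j s.1 : ℂ) - 1) * eval (v i) (f j) = 0 := by linear_combination -h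
      rcases mul_eq_zero.mp h2 with h3 | h3
      · exact sub_eq_zero.mp h3
      · exact absurd h3 (hvne i j hj)
    -- h₁ vanishes at v i
    have hh₁v : eval (v i) h₁ = 0 := by
      by_contra ha
      -- then χ i takes k i-th root of unity values on the stabilizer
      have hroot : ∀ s : {g : G // ρ g (v i) = v i}, (χ i s.1 : ℂ) ^ (k i) = 1 := by
        intro s
        have h := hΦ s.1 (v i)
        rw [s.2, hFv] at h
        have hprod : (∏ j, ((χ j s.1 : ℂ)) ^ (k j)) = (χ i s.1 : ℂ) ^ (k i) :=
          Finset.prod_eq_single_of_mem i (Finset.mem_univ i)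
            (fun j _ hj => by rw [hχj s j hj, one_pow])
        rw [hprod] at h
        have h2 : ((χ i s.1 : ℂ) ^ (k i) - 1) * eval (v i) h₁ = 0 := by linear_combination -h
        rcases mul_eq_zero.mp h2 with h3 | h3
        · exact sub_eq_zero.mp h3
        · exact absurd h3 ha
      obtain ⟨s, hs_comp, hs_ne⟩ := hnontriv i
      -- the continuous map s ↦ χ i s takes values in a finite set, so is constant on
      -- the identity component of the stabilizer
      set c : {g : G // ρ g (v i) = v i} → ℂ := fun t => (χ i t.1 : ℂ) with hc_def
      have hc_cont : Continuous c :=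
        (Units.continuous_val.comp (hχcont i)).comp continuous_subtype_val
      have himg : IsPreconnected
          (c '' connectedComponent (⟨1, by simp⟩ : {g : G // ρ g (v i) = v i})) :=
        isPreconnected_connectedComponent.image c hc_cont.continuousOn
      have hsub : c '' connectedComponent (⟨1, by simp⟩ : {g : G // ρ g (v i) = v i}) ⊆
          ↑((Polynomial.nthRoots (k i) (1 : ℂ)).toFinset) := by
        rintro x ⟨t, _, rfl⟩
        simp only [Multiset.mem_toFinset, Finset.coe_sort_coe, Multiset.mem_coe,
          Finset.mem_coe]
        rw [Polynomial.mem_nthRoots (Nat.pos_of_ne_zero hki)]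
        exact hroot t
      have hsing := subsingleton_of_preconnected_subset_finite himg hsub
        ((Polynomial.nthRoots (k i) (1 : ℂ)).toFinset.finite_toSet)
      have h1mem : (⟨1, by simp⟩ : {g : G // ρ g (v i) = v i}) ∈
          connectedComponent (⟨1, by simp⟩ : {g : G // ρ g (v i) = v i}) :=
        mem_connectedComponent
      have hcs : c s = c ⟨1, by simp⟩ :=
        hsing ⟨s, hs_comp, rfl⟩ ⟨⟨1, by simp⟩, h1mem, rfl⟩
      have hone : c (⟨1, by simp⟩ : {g : G // ρ g (v i) = v i}) = 1 := by
        simp [hc_def]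
      exact hs_ne (Units.ext (by rw [Units.val_one, ← hone, ← hcs]))
    -- hence h₁ vanishes on the whole orbit of v i, so f i divides h₁
    have hdvd1 : f i ∣ h₁ := by
      refine hdense i h₁ fun g => ?_
      rw [hΦ g (v i), hFv, hh₁v]
      ring
    have hdvd2 : f i ∣ ∏ j, (f j) ^ (k j) :=
      (dvd_pow_self (f i) hki).trans (Finset.dvd_prod_of_mem _ (Finset.mem_univ i))
    exact (hirr i).not_isUnit (hrp hdvd1 hdvd2)
  -- Step 2: with all k i = 0 the functional equation forces Φ = 0.
  intro g
  have h := hΦ g 0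
  have hρ0 : ρ g 0 = 0 := map_zero (ρ g)
  simp only [hk, pow_zero, Finset.prod_const_one, hρ0, map_one, one_mul] at h
  linear_combination -h
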